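/- Fix N ∈ ℕ and let u : ℝ → (ℕ → ℂ) with u(t,k) = 0 for all k > N, each t ↦ u(t,k) differentiable, satisfying the Galerkin system: for 0 ≤ k ≤ N, i·(d/dt)u(t,k) = ∑ u(t,n)·conj(u(t,j))·u(t,m), summed over (n,j,m) with 0 ≤ n,j,m ≤ N and n + m = j + k. Then the quantity ∑_{k=0}^{N} |u(t,k)|² is constant in t ∈ ℝ. -/

import Mathlib

open scoped BigOperators

/-- The cubic nonlinearity of the Galerkin-truncated Szegő equation on the Fourier side:
for frequency `k`, the sum of `u(t,n) * conj (u(t,j)) * u(t,m)` over all triples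
`(n,j,m)` with `0 ≤ n,j,m ≤ N` and `n + m = j + k`. -/
noncomputable def galerkinCubic (N : ℕ) (u : ℝ → ℕ → ℂ) (t : ℝ) (k : ℕ) : ℂ :=
  ∑ p ∈ (Finset.range (N + 1) ×ˢ Finset.range (N + 1) ×ˢ Finset.range (N + 1)).filter
      (fun p => p.1 + p.2.2 = p.2.1 + k),
    u t p.1 * (starRingEnd ℂ) (u t p.2.1) * u t p.2.2

/-- `u : ℝ → (ℕ → ℂ)` is a solution of the `N`-th Galerkin approximation
`i ∂ₜ u_N = P_N(|u_N|² u_N)` of the cubic Szegő equation: the Fourier coefficients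
vanish for `k > N`, and for `0 ≤ k ≤ N` the map `t ↦ u(t,k)` is differentiable with
`i u'(t,k) = ∑_{0 ≤ n,j,m ≤ N, n+m=j+k} u(t,n) conj(u(t,j)) u(t,m)`. -/
def IsGalerkinSolution (N : ℕ) (u : ℝ → ℕ → ℂ) : Prop :=
  (∀ t : ℝ, ∀ k : ℕ, N < k → u t k = 0) ∧
  ∀ t : ℝ, ∀ k : ℕ, k ≤ N →
    HasDerivAt (fun s : ℝ => u s k) (-Complex.I * galerkinCubic N u t k) t

lemma galerkin_sum_conj (N : ℕ) (u : ℝ → ℕ → ℂ) (t : ℝ) :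
    (starRingEnd ℂ) (∑ k ∈ Finset.range (N + 1),
        (starRingEnd ℂ) (u t k) * galerkinCubic N u t k)
      = ∑ k ∈ Finset.range (N + 1), (starRingEnd ℂ) (u t k) * galerkinCubic N u t k := by
  set R := Finset.range (N + 1) with hR
  have hexp : ∀ v : ℕ → ℂ,
      ∑ k ∈ R, (starRingEnd ℂ) (v k) *
        (∑ p ∈ (R ×ˢ R ×ˢ R).filter (fun p => p.1 + p.2.2 = p.2.1 + k),
          v p.1 * (starRingEnd ℂ) (v p.2.1) * v p.2.2)
      = ∑ q ∈ (R ×ˢ R ×ˢ R ×ˢ R).filter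
          (fun q : ℕ × ℕ × ℕ × ℕ => q.2.1 + q.2.2.2 = q.2.2.1 + q.1),
          (starRingEnd ℂ) (v q.1) * (v q.2.1 * (starRingEnd ℂ) (v q.2.2.1) * v q.2.2.2) := by
    intro v
    simp only [Finset.mul_sum, Finset.sum_filter, Finset.sum_product]
    simp
  have key : (starRingEnd ℂ) (∑ q ∈ (R ×ˢ R ×ˢ R ×ˢ R).filter
          (fun q : ℕ × ℕ × ℕ × ℕ => q.2.1 + q.2.2.2 = q.2.2.1 + q.1),
          (starRingEnd ℂ) (u t q.1) * (u t q.2.1 * (starRingEnd ℂ) (u t q.2.2.1) * u t q.2.2.2))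
      = ∑ q ∈ (R ×ˢ R ×ˢ R ×ˢ R).filter
          (fun q : ℕ × ℕ × ℕ × ℕ => q.2.1 + q.2.2.2 = q.2.2.1 + q.1),
          (starRingEnd ℂ) (u t q.1) * (u t q.2.1 * (starRingEnd ℂ) (u t q.2.2.1) * u t q.2.2.2) := by
    rw [map_sum]
    apply Finset.sum_nbij' (i := fun q : ℕ × ℕ × ℕ × ℕ => (q.2.2.2, q.2.2.1, q.2.1, q.1))
      (j := fun q : ℕ × ℕ × ℕ × ℕ => (q.2.2.2, q.2.2.1, q.2.1, q.1))
    · rintro ⟨a, b, c, d⟩ hq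
      simp only [Finset.mem_filter, Finset.mem_product, hR, Finset.mem_range] at hq ⊢
      omega
    · rintro ⟨a, b, c, d⟩ hq
      simp only [Finset.mem_filter, Finset.mem_product, hR, Finset.mem_range] at hq ⊢
      omega
    · intro q _; rfl
    · intro q _; rfl
    · intro q _
      simp only [map_mul, RingHomCompTriple.comp_apply, RingHom.id_apply,
        Complex.conj_conj]
      ring
  simpa only [galerkinCubic, ← hR, hexp] using key

/-- The `L²` norm `∑_{k=0}^{N} |u(t,k)|²` of a Galerkin solution
is conserved in time. -/
theorem galerkin_L2_conservation (N : ℕ) (u : ℝ → ℕ → ℂ)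
    (hu : IsGalerkinSolution N u) :
    ∀ t : ℝ, ∑ k ∈ Finset.range (N + 1), ‖u t k‖ ^ 2
      = ∑ k ∈ Finset.range (N + 1), ‖u 0 k‖ ^ 2 := by
  obtain ⟨-, hdiff⟩ := hu
  have hnorm : ∀ (r : ℝ) (k : ℕ), ‖u r k‖ ^ 2 = ((starRingEnd ℂ) (u r k) * u r k).re := by
    intro r k
    rw [mul_comm, Complex.mul_conj, Complex.ofReal_re, Complex.normSq_eq_norm_sq]
  have key : ∀ s : ℝ, HasDerivAt
      (fun r : ℝ => ∑ k ∈ Finset.range (N + 1), ‖u r k‖ ^ 2) 0 s := by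
    intro s
    have h0 : ∀ k ∈ Finset.range (N + 1), HasDerivAt (fun r : ℝ => ‖u r k‖ ^ 2)
        (((starRingEnd ℂ) (-Complex.I * galerkinCubic N u s k) * u s k
          + (starRingEnd ℂ) (u s k) * (-Complex.I * galerkinCubic N u s k)).re) s := by
      intro k hk
      have hk' : k ≤ N := Nat.lt_succ_iff.mp (Finset.mem_range.mp hk)
      have h := hdiff s k hk'
      have hc : HasDerivAt (fun r : ℝ => (starRingEnd ℂ) (u r k))
          ((starRingEnd ℂ) (-Complex.I * galerkinCubic N u s k)) s := h.star
      have hm := hc.mul h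
      have h2 := Complex.reCLM.hasFDerivAt.comp_hasDerivAt s hm
      have h3 : (fun r : ℝ => ‖u r k‖ ^ 2)
          = fun r => ((starRingEnd ℂ) (u r k) * u r k).re := funext fun r => hnorm r k
      rw [h3]
      exact h2
    have hsum := HasDerivAt.fun_sum h0
    have hzero : (∑ k ∈ Finset.range (N + 1),
        ((starRingEnd ℂ) (-Complex.I * galerkinCubic N u s k) * u s k
          + (starRingEnd ℂ) (u s k) * (-Complex.I * galerkinCubic N u s k)).re) = 0 := by
      rw [← Complex.re_sum]
      have hT := galerkin_sum_conj N u s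
      have : (∑ k ∈ Finset.range (N + 1),
          ((starRingEnd ℂ) (-Complex.I * galerkinCubic N u s k) * u s k
            + (starRingEnd ℂ) (u s k) * (-Complex.I * galerkinCubic N u s k))) = 0 := by
        have e1 : ∀ k, (starRingEnd ℂ) (-Complex.I * galerkinCubic N u s k) * u s k
            = Complex.I * (starRingEnd ℂ) ((starRingEnd ℂ) (u s k) * galerkinCubic N u s k) := by
          intro k
          simp only [map_mul, map_neg, Complex.conj_I, Complex.conj_conj]
          ring
        have e2 : ∀ k, (starRingEnd ℂ) (u s k) * (-Complex.I * galerkinCubic N u s k)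
            = -Complex.I * ((starRingEnd ℂ) (u s k) * galerkinCubic N u s k) := by
          intro k; ring
        rw [Finset.sum_add_distrib]
        simp only [e1, e2, ← Finset.mul_sum, ← map_sum]
        rw [hT]; ring
      rw [this, Complex.zero_re]
    rw [hzero] at hsum
    exact hsum
  intro t
  exact is_const_of_deriv_eq_zero (fun s => (key s).differentiableAt)
    (fun s => (key s).deriv) t 0
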